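/- Let H and G be finite simple graphs and let α ≥ β be integers. If H is a minor of G, then αprune(H) is a minor of βprune(G). -/

import Mathlib

/-- An `H`-model in `G`: branch sets `φ v ⊆ V(G)` inducing connected subgraphs,
pairwise disjoint, with an edge of `G` between the branch sets of adjacent vertices of `H`. -/
def IsMinorModel {V W : Type*} (G : SimpleGraph V) (H : SimpleGraph W)
    (φ : W → Set V) : Prop :=
  (∀ v : W, (G.induce (φ v)).Connected) ∧
  (∀ u v : W, H.Adj u v → ∃ u' ∈ φ u, ∃ v' ∈ φ v, G.Adj u' v') ∧
  (∀ u v : W, u ≠ v → Disjoint (φ u) (φ v))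

/-- `H` is a minor of `G` (`H ⪯ G`) if an `H`-model in `G` exists. -/
def IsMinorOf {V W : Type*} (H : SimpleGraph W) (G : SimpleGraph V) : Prop :=
  ∃ φ : W → Set V, IsMinorModel G H φ

/-- A graph is `α`-robust when it has at least `α` vertices and no vertex `v` exists
such that deleting `v` leaves a connected component with fewer than `α - 1` vertices. -/
def IsRobustGraph {V : Type*} (G : SimpleGraph V) (α : ℤ) : Prop :=
  α ≤ ((Set.univ : Set V).ncard : ℤ) ∧
  ∀ v : V, ∀ C : (G.induce {u | u ≠ v}).ConnectedComponent,
    α - 1 ≤ (C.supp.ncard : ℤ)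

/-- The vertex set of `αprune(G)`: the union of all vertex sets `A` for which
`G[A]` is `α`-robust. -/
def pruneSet {V : Type*} (G : SimpleGraph V) (α : ℤ) : Set V :=
  {v | ∃ A : Set V, IsRobustGraph (G.induce A) α ∧ v ∈ A}

/-- `αprune(G)`: the unique maximal `α`-robust subgraph of `G` (empty if none exists). -/
def prune {V : Type*} (G : SimpleGraph V) (α : ℤ) : SimpleGraph (pruneSet G α) :=
  G.induce (pruneSet G α)


open Relation

/-- Relation: step within a set `S` along an edge of `G`. -/
def SRel {V : Type*} (G : SimpleGraph V) (S : Set V) : V → V → Prop :=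
  fun x y => x ∈ S ∧ y ∈ S ∧ G.Adj x y

/-- Reachability within a set. -/
def ReachIn {V : Type*} (G : SimpleGraph V) (S : Set V) : V → V → Prop :=
  Relation.ReflTransGen (SRel G S)

lemma ReachIn.mono {V : Type*} {G : SimpleGraph V} {S T : Set V} (hST : S ⊆ T)
    {x y : V} (h : ReachIn G S x y) : ReachIn G T x y :=
  Relation.ReflTransGen.mono (fun _ _ hr => ⟨hST hr.1, hST hr.2.1, hr.2.2⟩) _ _ h

lemma ReachIn.symm {V : Type*} {G : SimpleGraph V} {S : Set V}
    {x y : V} (h : ReachIn G S x y) : ReachIn G S y x :=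
  (@Relation.ReflTransGen.stdSymm _ (SRel G S) ⟨fun _ _ hr => ⟨hr.2.1, hr.1, hr.2.2.symm⟩⟩).symm _ _ h

lemma ReachIn.mem_or {V : Type*} {G : SimpleGraph V} {S : Set V}
    {x y : V} (h : ReachIn G S x y) : y = x ∨ y ∈ S := by
  induction h with
  | refl => exact Or.inl rfl
  | tail _ h2 _ => exact Or.inr h2.2.1

lemma ReachIn.mem {V : Type*} {G : SimpleGraph V} {S : Set V}
    {x y : V} (h : ReachIn G S x y) (hx : x ∈ S) : y ∈ S := by
  rcases h.mem_or with rfl | h; exact hx; exact h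

lemma reachable_induce_iff {V : Type*} (G : SimpleGraph V) (S : Set V) (a b : S) :
    (G.induce S).Reachable a b ↔ ReachIn G S a.val b.val := by
  constructor
  · rintro ⟨w⟩
    induction w with
    | nil => exact Relation.ReflTransGen.refl
    | cons h _ ih =>
      exact Relation.ReflTransGen.head ⟨(by exact Subtype.mem _), (by exact Subtype.mem _), h⟩ ih
  · intro h
    have key : ∀ y : V, ReachIn G S a.val y → ∀ hy : y ∈ S,
        (G.induce S).Reachable a ⟨y, hy⟩ := by
      intro y h
      induction h with
      | refl => intro hy; exact (by rw [show (⟨a.val, hy⟩ : S) = a from Subtype.ext rfl])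
      | tail h1 h2 ih =>
        intro hy
        exact (ih h2.1).trans (SimpleGraph.Adj.reachable (by exact h2.2.2))
    have := key b.val h b.2
    rwa [show (⟨b.val, b.2⟩ : S) = b from Subtype.ext rfl] at this

lemma reachIn_induce_iff {V : Type*} (G : SimpleGraph V) (Q : Set V) (T : Set Q)
    (a b : Q) : ReachIn (G.induce Q) T a b ↔ ReachIn G (Subtype.val '' T) a.val b.val := by
  constructor
  · intro h
    refine Relation.ReflTransGen.lift Subtype.val (fun x y hr => ?_) _ _ h
    exact ⟨⟨x, hr.1, rfl⟩, ⟨y, hr.2.1, rfl⟩, hr.2.2⟩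
  · intro h
    have key : ∀ y : V, ReachIn G (Subtype.val '' T) a.val y → ∀ hy : y ∈ Q,
        ReachIn (G.induce Q) T a ⟨y, hy⟩ := by
      intro y h
      induction h with
      | refl =>
        intro hy
        rw [show (⟨a.val, hy⟩ : Q) = a from Subtype.ext rfl]
        exact Relation.ReflTransGen.refl
      | @tail b c h1 h2 ih =>
        intro hy
        obtain ⟨hb', hc', hadj⟩ := h2
        obtain ⟨t, ht, htv⟩ := hb'
        have hbQ : b ∈ Q := htv ▸ t.2
        refine Relation.ReflTransGen.tail (ih hbQ) ⟨?_, ?_, ?_⟩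
        · rwa [show (⟨b, hbQ⟩ : Q) = t from Subtype.ext htv.symm]
        · obtain ⟨s, hs, hsv⟩ := hc'
          rwa [show (⟨c, hy⟩ : Q) = s from Subtype.ext hsv.symm]
        · exact hadj
    have hb : b.val ∈ Q := b.2
    have := key b.val h hb
    rwa [show (⟨b.val, hb⟩ : Q) = b from Subtype.ext rfl] at this

lemma connected_induce_iff {V : Type*} (G : SimpleGraph V) (S : Set V) :
    (G.induce S).Connected ↔ S.Nonempty ∧ ∀ a ∈ S, ∀ b ∈ S, ReachIn G S a b := by
  rw [SimpleGraph.connected_iff]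
  constructor
  · rintro ⟨hp, ⟨x⟩⟩
    refine ⟨⟨x.val, x.2⟩, fun a ha b hb => ?_⟩
    have := hp ⟨a, ha⟩ ⟨b, hb⟩
    rwa [reachable_induce_iff] at this
  · rintro ⟨⟨x, hx⟩, h⟩
    refine ⟨fun a b => ?_, ⟨⟨x, hx⟩⟩⟩
    rw [reachable_induce_iff]
    exact h a.val a.2 b.val b.2

/-- The set of vertices reachable from `w` within `S`. -/
def compOf {V : Type*} (G : SimpleGraph V) (S : Set V) (w : V) : Set V :=
  {u | ReachIn G S w u}

lemma self_mem_compOf {V : Type*} (G : SimpleGraph V) (S : Set V) (w : V) :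
    w ∈ compOf G S w := Relation.ReflTransGen.refl

lemma compOf_mono {V : Type*} (G : SimpleGraph V) {S T : Set V} (h : S ⊆ T) (w : V) :
    compOf G S w ⊆ compOf G T w := fun _ hu => ReachIn.mono h hu

lemma compOf_subset {V : Type*} (G : SimpleGraph V) {S : Set V} {w : V} (hw : w ∈ S) :
    compOf G S w ⊆ S := fun _ hu => ReachIn.mem hu hw

lemma supp_image {V : Type*} (G : SimpleGraph V) (A : Set V) (v : A)
    (w : {u : A | u ≠ v}) :
    (fun x : {u : A | u ≠ v} => x.val.val) ''
      (SimpleGraph.connectedComponentMk ((G.induce A).induce {u | u ≠ v}) w).supp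
      = compOf G (A \ {v.val}) w.val.val := by
  have himg : Subtype.val '' {u : A | u ≠ v} = A \ {v.val} := by
    ext u
    constructor
    · rintro ⟨t, ht, rfl⟩
      exact ⟨t.2, fun hc => ht (Subtype.ext hc)⟩
    · rintro ⟨hA, hne⟩
      exact ⟨⟨u, hA⟩, fun hc => hne (congrArg Subtype.val hc), rfl⟩
  have hreach : ∀ x : {u : A | u ≠ v},
      ((G.induce A).induce {u | u ≠ v}).Reachable x w ↔
        ReachIn G (A \ {v.val}) x.val.val w.val.val := by
    intro x
    rw [reachable_induce_iff (G.induce A) {u | u ≠ v} x w,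
      reachIn_induce_iff G A {u | u ≠ v} x.val w.val, himg]
  ext u
  constructor
  · rintro ⟨x, hx, rfl⟩
    rw [SimpleGraph.ConnectedComponent.mem_supp_iff,
      SimpleGraph.ConnectedComponent.eq, hreach] at hx
    exact hx.symm
  · intro hu
    have hmem : u ∈ A \ {v.val} := by
      rcases (ReachIn.mem_or hu) with rfl | h
      · exact ⟨w.val.2, fun hc => w.2 (by exact Subtype.ext hc)⟩
      · exact h
    refine ⟨⟨⟨u, hmem.1⟩, fun hc => hmem.2 (congrArg Subtype.val hc)⟩, ?_, rfl⟩
    rw [SimpleGraph.ConnectedComponent.mem_supp_iff,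
      SimpleGraph.ConnectedComponent.eq, hreach]
    exact ReachIn.symm hu

/-- `V`-level reformulation of robustness of an induced subgraph. -/
def RobustSet {V : Type*} (G : SimpleGraph V) (α : ℤ) (A : Set V) : Prop :=
  α ≤ (A.ncard : ℤ) ∧
  ∀ v ∈ A, ∀ w ∈ A, w ≠ v → α - 1 ≤ ((compOf G (A \ {v}) w).ncard : ℤ)

lemma robustSet_iff {V : Type*} (G : SimpleGraph V) (α : ℤ) (A : Set V) :
    IsRobustGraph (G.induce A) α ↔ RobustSet G α A := by
  have hcard : ((Set.univ : Set A).ncard : ℤ) = (A.ncard : ℤ) := by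
    rw [Set.ncard_univ, Nat.card_coe_set_eq]
  have hinj : ∀ v : A, Function.Injective (fun x : {u : A | u ≠ v} => x.val.val) :=
    fun v a b hab => Subtype.ext (Subtype.ext hab)
  have heq : ∀ (v : A) (w : {u : A | u ≠ v}),
      ((SimpleGraph.connectedComponentMk ((G.induce A).induce {u | u ≠ v}) w).supp.ncard : ℤ)
        = ((compOf G (A \ {v.val}) w.val.val).ncard : ℤ) := by
    intro v w
    rw [← supp_image G A v w, Set.ncard_image_of_injective _ (hinj v)]
  constructor
  · rintro ⟨h1, h2⟩
    refine ⟨by rwa [hcard] at h1, fun v hv w hw hne => ?_⟩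
    have hwT : (⟨w, hw⟩ : A) ≠ ⟨v, hv⟩ := fun hc => hne (congrArg Subtype.val hc)
    have := h2 ⟨v, hv⟩ (SimpleGraph.connectedComponentMk _ ⟨⟨w, hw⟩, hwT⟩)
    rw [heq ⟨v, hv⟩ ⟨⟨w, hw⟩, hwT⟩] at this
    exact this
  · rintro ⟨h1, h2⟩
    refine ⟨by rwa [hcard], fun v C => ?_⟩
    obtain ⟨w, rfl⟩ := C.exists_rep
    show α - 1 ≤ ((SimpleGraph.connectedComponentMk _ w).supp.ncard : ℤ)
    rw [heq v w]
    exact h2 v.val v.2 w.val.val w.val.2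
      (fun hc => w.2 (by exact Subtype.ext hc))

lemma compOf_eq_of_not_mem {V : Type*} {G : SimpleGraph V} {S : Set V} {w u : V}
    (hu : u ∉ compOf G S w) : compOf G (S \ {u}) w = compOf G S w := by
  refine Set.Subset.antisymm (compOf_mono G Set.diff_subset w) (fun x hx => ?_)
  induction hx with
  | refl => exact Relation.ReflTransGen.refl
  | @tail y z h1 h2 ih =>
    have hyne : y ≠ u := fun hc => hu (hc ▸ h1)
    have hzne : z ≠ u := fun hc => hu (hc ▸ Relation.ReflTransGen.tail h1 h2)
    exact Relation.ReflTransGen.tail ih ⟨⟨h2.1, hyne⟩, ⟨h2.2.1, hzne⟩, h2.2.2⟩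

lemma IsRobustGraph.mono {V : Type*} {G : SimpleGraph V} {α β : ℤ}
    (h : IsRobustGraph G α) (hβα : β ≤ α) : IsRobustGraph G β :=
  ⟨hβα.trans h.1, fun v C => le_trans (by linarith) (h.2 v C)⟩

lemma mem_pruneSet_iff {V : Type*} (G : SimpleGraph V) (α : ℤ) (v : V) :
    v ∈ pruneSet G α ↔ ∃ A : Set V, RobustSet G α A ∧ v ∈ A := by
  unfold pruneSet
  simp only [Set.mem_setOf_eq, robustSet_iff]

lemma robustSet_pruneSet {W : Type*} [Fintype W] (H : SimpleGraph W) (α : ℤ)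
    (hne : (pruneSet H α).Nonempty) : RobustSet H α (pruneSet H α) := by
  set P := pruneSet H α with hP
  have hsubP : ∀ {A : Set W}, RobustSet H α A → A ⊆ P := by
    intro A hA a ha
    exact (mem_pruneSet_iff H α a).2 ⟨A, hA, ha⟩
  constructor
  · obtain ⟨v, hv⟩ := hne
    obtain ⟨A, hA, hvA⟩ := (mem_pruneSet_iff H α v).1 hv
    calc α ≤ (A.ncard : ℤ) := hA.1
      _ ≤ (P.ncard : ℤ) := by
          exact_mod_cast Set.ncard_le_ncard (hsubP hA) (Set.toFinite P)
  · intro v hv w hw hne'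
    obtain ⟨A, hA, hwA⟩ := (mem_pruneSet_iff H α w).1 hw
    have hAP : A ⊆ P := hsubP hA
    have key : α - 1 ≤ ((compOf H (A \ {v}) w).ncard : ℤ) := by
      by_cases hvA : v ∈ A
      · exact hA.2 v hvA w hwA hne'
      · rw [Set.diff_singleton_eq_self hvA]
        by_cases hfull : ∀ u ∈ A, u ∈ compOf H A w
        · have hsub : A ⊆ compOf H A w := hfull
          calc α - 1 ≤ α := by linarith
            _ ≤ (A.ncard : ℤ) := hA.1
            _ ≤ ((compOf H A w).ncard : ℤ) := by
                exact_mod_cast Set.ncard_le_ncard hsub (Set.toFinite _)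
        · push_neg at hfull
          obtain ⟨u, huA, hu⟩ := hfull
          have hwu : w ≠ u := fun hc => hu (hc ▸ self_mem_compOf H A w)
          have := hA.2 u huA w hwA hwu
          rwa [compOf_eq_of_not_mem hu] at this
    calc α - 1 ≤ ((compOf H (A \ {v}) w).ncard : ℤ) := key
      _ ≤ ((compOf H (P \ {v}) w).ncard : ℤ) := by
          exact_mod_cast Set.ncard_le_ncard
            (compOf_mono H (Set.diff_subset_diff_left hAP) w) (Set.toFinite _)

/-- For `α ≥ β`, if `H` is a minor of `G` then `αprune(H)` is a minor of `βprune(G)`. -/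
theorem stmt_8 {V W : Type*} [Fintype V] [Fintype W]
    (H : SimpleGraph W) (G : SimpleGraph V) (α β : ℤ) (hαβ : β ≤ α)
    (h : IsMinorOf H G) :
    IsMinorOf (prune H α) (prune G β) := by
  classical
  by_cases hA : (pruneSet H α).Nonempty
  swap
  · -- empty prune of H : trivial model
    refine ⟨fun _ => ∅, fun v => absurd ⟨v.1, v.2⟩ hA,
      fun u _ _ => absurd ⟨u.1, u.2⟩ hA, fun u _ _ => absurd ⟨u.1, u.2⟩ hA⟩
  obtain ⟨φ₀, hconn₀, hadj₀, hdisj₀⟩ := h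
  -- a model of H.induce (pruneSet H α) in G
  have hP : ∃ n : ℕ, ∃ ψ : (pruneSet H α) → Set V,
      IsMinorModel G (H.induce (pruneSet H α)) ψ ∧ (⋃ v, ψ v).ncard = n := by
    refine ⟨_, fun v => φ₀ v.val, ⟨fun v => hconn₀ v.val, fun u v huv => ?_,
      fun u v huv => hdisj₀ u.val v.val (fun hc => huv (Subtype.ext hc))⟩, rfl⟩
    exact hadj₀ u.val v.val huv
  obtain ⟨ψ, ⟨hconn, hadj, hdisj⟩, hn⟩ := Nat.find_spec hP
  set U : Set V := ⋃ v, ψ v with hU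
  -- basic facts about the minimal model
  have hne : ∀ v, (ψ v).Nonempty := fun v => ((connected_induce_iff G _).1 (hconn v)).1
  have hreach : ∀ v, ∀ a ∈ ψ v, ∀ b ∈ ψ v, ReachIn G (ψ v) a b :=
    fun v => ((connected_induce_iff G _).1 (hconn v)).2
  have hsubU : ∀ v, ψ v ⊆ U := fun v => Set.subset_iUnion ψ v
  set f : (pruneSet H α) → V := fun v => (hne v).choose with hf'
  have hf : ∀ v, f v ∈ ψ v := fun v => (hne v).choose_spec
  have hfinj : Function.Injective f := by
    intro u v huv
    by_contra hc
    exact Set.disjoint_left.1 (hdisj u v hc) (hf u) (huv ▸ hf v)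
  have hrobA : RobustSet H α (pruneSet H α) := robustSet_pruneSet H α hA
  -- the union of the minimal model is α-robust
  have hrobU : RobustSet G α U := by
    constructor
    · calc α ≤ ((pruneSet H α).ncard : ℤ) := hrobA.1
        _ ≤ (U.ncard : ℤ) := by
            rw [← Nat.card_coe_set_eq, ← Nat.card_range_of_injective hfinj,
              Nat.card_coe_set_eq]
            exact_mod_cast Set.ncard_le_ncard
              (Set.range_subset_iff.2 fun v => hsubU v (hf v)) (Set.toFinite U)
    · intro x hx w hw hwx
      obtain ⟨v, hxv⟩ := Set.mem_iUnion.1 hx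
      set C : Set V := compOf G (U \ {x}) w with hC
      have hCstep : ∀ {c d : V}, c ∈ C → d ∈ U \ {x} → G.Adj c d → d ∈ C :=
        fun hc hd hcd => Relation.ReflTransGen.tail hc
          ⟨(ReachIn.mem_or hc).elim (fun h' => h' ▸ ⟨hw, hwx⟩) id, hd, hcd⟩
      have hxC : x ∉ C := fun hc =>
        (ReachIn.mem_or hc).elim (fun h' => hwx h'.symm) (fun h' => h'.2 rfl)
      have hpsub : ∀ u, u ≠ v → ψ u ⊆ U \ {x} := by
        intro u hu y hy
        exact ⟨hsubU u hy, fun hc =>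
          Set.disjoint_left.1 (hdisj u v hu) hy (hc ▸ hxv)⟩
      have hbranch : ∀ u, u ≠ v → (ψ u ∩ C).Nonempty → ψ u ⊆ C := by
        rintro u hu ⟨y0, hy0ψ, hy0C⟩ c hc
        exact Relation.ReflTransGen.trans hy0C
          (ReachIn.mono (hpsub u hu) (hreach u y0 hy0ψ c hc))
      by_cases hcase : ∃ u, u ≠ v ∧ (ψ u ∩ C).Nonempty
      · -- some other branch set meets C; C picks up whole H-components
        obtain ⟨u₀, hu₀v, hmeet⟩ := hcase
        have hCH := hrobA.2 v.val v.2 u₀.val u₀.2 (fun hc => hu₀v (Subtype.ext hc))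
        set CH : Set W := compOf H (pruneSet H α \ {v.val}) u₀.val with hCH'
        have hspread : ∀ b : W, b ∈ CH → ∀ hbA : b ∈ pruneSet H α,
            ψ ⟨b, hbA⟩ ⊆ C := by
          intro b hb
          induction hb with
          | refl =>
            intro hbA
            rw [show (⟨u₀.val, hbA⟩ : (pruneSet H α)) = u₀ from Subtype.ext rfl]
            exact hbranch u₀ hu₀v hmeet
          | @tail y z h1 h2 ih =>
            intro hzA
            have hyC : ψ ⟨y, h2.1.1⟩ ⊆ C := ih h2.1.1
            have hzv : (⟨z, hzA⟩ : (pruneSet H α)) ≠ v :=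
              fun hc => h2.2.1.2 (congrArg Subtype.val hc)
            obtain ⟨a, ha, b', hb', hab⟩ := hadj ⟨y, h2.1.1⟩ ⟨z, hzA⟩ h2.2.2
            have hb'C : b' ∈ C := hCstep (hyC ha) (hpsub _ hzv hb') hab
            exact hbranch ⟨z, hzA⟩ hzv ⟨b', hb', hb'C⟩
        -- count: each H-vertex of CH contributes a distinct vertex to C
        set T : Set (pruneSet H α) := Subtype.val ⁻¹' CH with hT
        have hTval : Subtype.val '' T = CH := by
          apply Set.Subset.antisymm
          · rintro _ ⟨t, ht, rfl⟩; exact ht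
          · intro b hb
            have hbA : b ∈ pruneSet H α := by
              rcases ReachIn.mem_or hb with rfl | h'
              · exact u₀.2
              · exact h'.1
            exact ⟨⟨b, hbA⟩, hb, rfl⟩
        have hfT : f '' T ⊆ C := by
          rintro _ ⟨t, ht, rfl⟩
          have := hspread t.val ht t.2
          rw [show (⟨t.val, t.2⟩ : (pruneSet H α)) = t from Subtype.ext rfl] at this
          exact this (hf t)
        calc α - 1 ≤ (CH.ncard : ℤ) := hCH
          _ = (T.ncard : ℤ) := by
              rw [← hTval, Set.ncard_image_of_injective _ Subtype.val_injective]
          _ = ((f '' T).ncard : ℤ) := by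
              rw [Set.ncard_image_of_injective _ hfinj]
          _ ≤ (C.ncard : ℤ) := by
              exact_mod_cast Set.ncard_le_ncard hfT (Set.toFinite C)
      · -- C is trapped inside ψ v : contradicts minimality
        exfalso
        push_neg at hcase
        have hCsub : C ⊆ ψ v := by
          intro c hc
          have hcU : c ∈ U := ((ReachIn.mem_or hc).elim (fun h' => h' ▸ hw)
            (fun h' => h'.1))
          obtain ⟨u, hcu⟩ := Set.mem_iUnion.1 hcU
          by_cases huv : u = v
          · exact huv ▸ hcu
          · have hmem : c ∈ ψ u ∩ C := ⟨hcu, hc⟩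
            rw [hcase u huv] at hmem
            exact hmem.elim
        have hwC : w ∈ C := self_mem_compOf G _ w
        have hnoedge : ∀ c ∈ C, ∀ u', u' ≠ v → ∀ b ∈ ψ u', ¬ G.Adj c b := by
          intro c hc u' hu' b hb hadj'
          have hbC : b ∈ C := hCstep hc (hpsub u' hu' hb) hadj'
          have hmem : b ∈ ψ u' ∩ C := ⟨hb, hbC⟩
          rw [hcase u' hu'] at hmem
          exact hmem.elim
        -- reachability towards x inside ψ v can avoid C
        have havoid : ∀ z, ReachIn G (ψ v) z x → z ∉ C → ReachIn G (ψ v \ C) z x := by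
          intro z hz
          induction hz using Relation.ReflTransGen.head_induction_on with
          | refl => intro _; exact Relation.ReflTransGen.refl
          | @head a c h' hrest ih =>
            intro haC
            by_cases hcC : c ∈ C
            · have hax : a = x := by
                by_contra hax
                exact haC (hCstep hcC ⟨hsubU v h'.1, hax⟩ h'.2.2.symm)
              exact hax ▸ Relation.ReflTransGen.refl
            · exact Relation.ReflTransGen.head
                ⟨⟨h'.1, haC⟩, ⟨h'.2.1, hcC⟩, h'.2.2⟩ (ih hcC)
        have hconn' : (G.induce (ψ v \ C)).Connected := by
          rw [connected_induce_iff]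
          refine ⟨⟨x, hxv, hxC⟩, fun a ha b hb => ?_⟩
          exact Relation.ReflTransGen.trans
            (havoid a (hreach v a ha.1 x hxv) ha.2)
            (ReachIn.symm (havoid b (hreach v b hb.1 x hxv) hb.2))
        set ψ' : (pruneSet H α) → Set V := Function.update ψ v (ψ v \ C) with hψ'
        have hψ'sub : ∀ u, ψ' u ⊆ ψ u := by
          intro u
          by_cases huv : u = v
          · subst huv; rw [hψ', Function.update_self]; exact Set.diff_subset
          · rw [hψ', Function.update_of_ne huv]
        have hmodel' : IsMinorModel G (H.induce (pruneSet H α)) ψ' := by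
          refine ⟨fun u => ?_, fun u u' huu' => ?_, fun u u' huu' =>
            (hdisj u u' huu').mono (hψ'sub u) (hψ'sub u')⟩
          · by_cases huv : u = v
            · subst huv; rw [hψ', Function.update_self]; exact hconn'
            · rw [hψ', Function.update_of_ne huv]; exact hconn u
          · have hneq : u ≠ u' := huu'.ne
            obtain ⟨a, ha, b, hb, hab⟩ := hadj u u' huu'
            refine ⟨a, ?_, b, ?_, hab⟩
            · by_cases huv : u = v
              · subst huv
                rw [hψ', Function.update_self]
                exact ⟨ha, fun haC => hnoedge a haC u' (Ne.symm hneq) b hb hab⟩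
              · rw [hψ', Function.update_of_ne huv]; exact ha
            · by_cases huv : u' = v
              · subst huv
                rw [hψ', Function.update_self]
                exact ⟨hb, fun hbC => hnoedge b hbC u hneq a ha hab.symm⟩
              · rw [hψ', Function.update_of_ne huv]; exact hb
        have hwnot : w ∉ ⋃ u, ψ' u := by
          rw [Set.mem_iUnion]
          rintro ⟨u, hwu⟩
          by_cases huv : u = v
          · subst huv; rw [hψ', Function.update_self] at hwu; exact hwu.2 hwC
          · rw [hψ', Function.update_of_ne huv] at hwu
            have hmem : w ∈ ψ u ∩ C := ⟨hwu, hwC⟩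
            rw [hcase u huv] at hmem
            exact hmem.elim
        have hlt : (⋃ u, ψ' u).ncard < U.ncard := by
          refine Set.ncard_lt_ncard
            ⟨Set.iUnion_subset fun u => (hψ'sub u).trans (hsubU u),
              fun hcon => hwnot (hcon hw)⟩ (Set.toFinite U)
        have hge : Nat.find hP ≤ (⋃ u, ψ' u).ncard :=
          Nat.find_le ⟨ψ', hmodel', rfl⟩
        omega
  -- the union is β-robust, hence contained in pruneSet G β
  have hrobU' : IsRobustGraph (G.induce U) β :=
    ((robustSet_iff G α U).2 hrobU).mono hαβ
  have hUQ : U ⊆ pruneSet G β := fun a ha => ⟨U, hrobU', ha⟩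
  refine ⟨fun v => {q : (pruneSet G β) | q.val ∈ ψ v}, fun v => ?_,
    fun u u' huu' => ?_, fun u u' huu' => ?_⟩
  · -- connectivity
    have himg : Subtype.val '' {q : (pruneSet G β) | q.val ∈ ψ v} = ψ v := by
      apply Set.Subset.antisymm
      · rintro _ ⟨q, hq, rfl⟩; exact hq
      · intro y hy; exact ⟨⟨y, hUQ (hsubU v hy)⟩, hy, rfl⟩
    show ((G.induce (pruneSet G β)).induce {q : (pruneSet G β) | q.val ∈ ψ v}).Connected
    rw [connected_induce_iff]
    constructor
    · obtain ⟨y, hy⟩ := hne v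
      exact ⟨⟨y, hUQ (hsubU v hy)⟩, hy⟩
    · intro a ha b hb
      rw [reachIn_induce_iff G (pruneSet G β) _ a b, himg]
      exact hreach v a.val ha b.val hb
  · -- adjacency
    obtain ⟨a, ha, b, hb, hab⟩ := hadj u u' huu'
    exact ⟨⟨a, hUQ (hsubU u ha)⟩, ha, ⟨b, hUQ (hsubU u' hb)⟩, hb, hab⟩
  · -- disjointness
    rw [Set.disjoint_left]
    rintro q hq hq'
    exact Set.disjoint_left.1 (hdisj u u' huu') hq hq'
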